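/- Let (Q, μ) be a finite measure space, let a : ℝ^d → ℝ^d be continuous and monotone (i.e. (a(ξ) − a(η))·(ξ − η) ≥ 0 for all ξ, η ∈ ℝ^d), and let G, α : Q → ℝ^d be measurable. Assume: (i) the function z ↦ (a(0) − α(z))·G(z) is μ-integrable; (ii) for every bounded measurable ζ : Q → ℝ^d, the functions z ↦ α(z)·ζ(z), z ↦ a(G(z))·ζ(z) and z ↦ a(G(z) + ζ(z))·ζ(z) are μ-integrable; (iii) for every bounded measurable η : Q → ℝ^d for which z ↦ (a(η(z)) − α(z))·(η(z) − G(z)) is μ-integrable, one has ∫_Q (a(η(z)) − α(z))·(η(z) − G(z)) dμ ≥ 0. Then α(z) = a(G(z)) for μ-almost every z ∈ Q. -/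

import Mathlib

open MeasureTheory

set_option maxHeartbeats 2000000 in
/-- Minty's monotonicity trick: if `a : ℝ^d → ℝ^d` is continuous and monotone,
`G, α : Q → ℝ^d` are measurable on a finite measure space, the relevant
integrability conditions hold, and
`∫_Q (a(η) − α)·(η − G) dμ ≥ 0` for every bounded measurable `η` making the
integrand integrable, then `α = a(G)` almost everywhere. -/
theorem stmt_9 {Q : Type*} [MeasurableSpace Q] (μ : Measure Q) [IsFiniteMeasure μ]
    {d : ℕ} (a : EuclideanSpace ℝ (Fin d) → EuclideanSpace ℝ (Fin d))
    (ha_cont : Continuous a)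
    (ha_mono : ∀ ξ η : EuclideanSpace ℝ (Fin d), 0 ≤ (inner ℝ (a ξ - a η) (ξ - η) : ℝ))
    (G α : Q → EuclideanSpace ℝ (Fin d))
    (hG : Measurable G) (hα : Measurable α)
    (h1 : Integrable (fun z => (inner ℝ (a 0 - α z) (G z) : ℝ)) μ)
    (h2 : ∀ ζ : Q → EuclideanSpace ℝ (Fin d), Measurable ζ → (∃ M : ℝ, ∀ z, ‖ζ z‖ ≤ M) →
      Integrable (fun z => (inner ℝ (α z) (ζ z) : ℝ)) μ ∧
      Integrable (fun z => (inner ℝ (a (G z)) (ζ z) : ℝ)) μ ∧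
      Integrable (fun z => (inner ℝ (a (G z + ζ z)) (ζ z) : ℝ)) μ)
    (h3 : ∀ η : Q → EuclideanSpace ℝ (Fin d), Measurable η → (∃ M : ℝ, ∀ z, ‖η z‖ ≤ M) →
      Integrable (fun z => (inner ℝ (a (η z) - α z) (η z - G z) : ℝ)) μ →
      0 ≤ ∫ z, (inner ℝ (a (η z) - α z) (η z - G z) : ℝ) ∂μ) :
    ∀ᵐ z ∂μ, α z = a (G z) := by
  classical
  -- Key step: for every bounded measurable ζ, ∫ (a(G) - α)·ζ ≥ 0.
  have key : ∀ ζ : Q → EuclideanSpace ℝ (Fin d), Measurable ζ → (∀ z, ‖ζ z‖ ≤ 1) →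
      0 ≤ ∫ z, (inner ℝ (a (G z) - α z) (ζ z) : ℝ) ∂μ := by
    intro ζ hζm hζb
    set h : ℝ → Q → ℝ := fun s z => (inner ℝ (a (G z + s • ζ z) - α z) (ζ z) : ℝ) with hh
    have h0eq : ∀ z, h 0 z = (inner ℝ (a (G z) - α z) (ζ z) : ℝ) := by
      intro z; simp [hh]
    -- monotonicity of h in s
    have mono : ∀ s t : ℝ, s ≤ t → ∀ z, h s z ≤ h t z := by
      intro s t hst z
      rcases eq_or_lt_of_le hst with rfl | hlt
      · exact le_rfl
      · have hm := ha_mono (G z + t • ζ z) (G z + s • ζ z)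
        have heq : (G z + t • ζ z) - (G z + s • ζ z) = (t - s) • ζ z := by
          rw [sub_smul]; abel
        rw [heq, real_inner_smul_right] at hm
        have hX : 0 ≤ (inner ℝ (a (G z + t • ζ z) - a (G z + s • ζ z)) (ζ z) : ℝ) := by
          by_contra hc
          push_neg at hc
          nlinarith
        have hdiff : h t z - h s z
            = (inner ℝ (a (G z + t • ζ z) - a (G z + s • ζ z)) (ζ z) : ℝ) := by
          simp only [hh, inner_sub_left]
          ring
        linarith
    -- measurability
    have hmeas : ∀ s : ℝ, AEStronglyMeasurable (h s) μ := by
      intro s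
      exact (((ha_cont.measurable.comp (hG.add (hζm.const_smul s))).sub hα).inner
        hζm).aestronglyMeasurable
    obtain ⟨hI1, hI2, hI3⟩ := h2 ζ hζm ⟨1, hζb⟩
    have int_h0 : Integrable (h 0) μ := by
      have heq : h 0 = fun z => (inner ℝ (a (G z)) (ζ z) : ℝ) - (inner ℝ (α z) (ζ z) : ℝ) := by
        funext z; simp [hh, inner_sub_left]
      rw [heq]; exact hI2.sub hI1
    have int_h1 : Integrable (h 1) μ := by
      have heq : h 1 = fun z =>
          (inner ℝ (a (G z + ζ z)) (ζ z) : ℝ) - (inner ℝ (α z) (ζ z) : ℝ) := by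
        funext z; simp [hh, inner_sub_left]
      rw [heq]; exact hI3.sub hI1
    -- step 1: for 0 < s ≤ 1, 0 ≤ ∫ h s
    have step1 : ∀ s : ℝ, 0 < s → s ≤ 1 → 0 ≤ ∫ z, h s z ∂μ := by
      intro s hs hs1
      obtain ⟨hJ1, hJ2, hJ3⟩ := h2 (fun z => s • ζ z) (hζm.const_smul s)
        ⟨s, fun z => by
          rw [norm_smul, Real.norm_eq_abs, abs_of_pos hs]
          nlinarith [hζb z, norm_nonneg (ζ z)]⟩
      have int_f : Integrable
          (fun z => (inner ℝ (a (G z + s • ζ z) - α z) (s • ζ z) : ℝ)) μ := by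
        have heq : (fun z => (inner ℝ (a (G z + s • ζ z) - α z) (s • ζ z) : ℝ))
            = fun z => (inner ℝ (a (G z + s • ζ z)) (s • ζ z) : ℝ)
                - (inner ℝ (α z) (s • ζ z) : ℝ) := by
          funext z; rw [inner_sub_left]
        rw [heq]; exact hJ3.sub hJ1
      have int_g : Integrable
          (fun z => (inner ℝ (a 0 - α z) ((0 : EuclideanSpace ℝ (Fin d)) - G z) : ℝ)) μ := by
        have heq : (fun z => (inner ℝ (a 0 - α z) ((0 : EuclideanSpace ℝ (Fin d)) - G z) : ℝ))
            = fun z => -(inner ℝ (a 0 - α z) (G z) : ℝ) := by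
          funext z; rw [zero_sub, inner_neg_right]
        rw [heq]; exact h1.neg
      set S : ℕ → Set Q := fun i => {z | ‖G z‖ ≤ (i : ℝ)} with hS
      have hSm : ∀ i, MeasurableSet (S i) :=
        fun i => measurableSet_le hG.norm measurable_const
      have hSmono : Monotone S := by
        intro i j hij z hz
        simp only [hS, Set.mem_setOf_eq] at hz ⊢
        exact hz.trans (Nat.cast_le.mpr hij)
      have hSU : ⋃ i, S i = Set.univ := by
        ext z
        simp only [Set.mem_iUnion, Set.mem_univ, iff_true, hS, Set.mem_setOf_eq]
        exact ⟨⌈‖G z‖⌉₊, Nat.le_ceil _⟩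
      have main : ∀ i : ℕ,
          0 ≤ (∫ z in S i, (inner ℝ (a (G z + s • ζ z) - α z) (s • ζ z) : ℝ) ∂μ)
            + ∫ z in (S i)ᶜ,
                (inner ℝ (a 0 - α z) ((0 : EuclideanSpace ℝ (Fin d)) - G z) : ℝ) ∂μ := by
        intro i
        set η : Q → EuclideanSpace ℝ (Fin d) :=
          fun z => if ‖G z‖ ≤ (i : ℝ) then G z + s • ζ z else 0 with hηdef
        have hηm : Measurable η :=
          Measurable.ite (hSm i) (hG.add (hζm.const_smul s)) measurable_const
        have hηb : ∃ M : ℝ, ∀ z, ‖η z‖ ≤ M := by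
          refine ⟨(i : ℝ) + 1, fun z => ?_⟩
          by_cases hz : ‖G z‖ ≤ (i : ℝ)
          · simp only [hηdef, if_pos hz]
            calc ‖G z + s • ζ z‖ ≤ ‖G z‖ + ‖s • ζ z‖ := norm_add_le _ _
              _ ≤ (i : ℝ) + 1 := by
                  rw [norm_smul, Real.norm_eq_abs, abs_of_pos hs]
                  nlinarith [hζb z, norm_nonneg (ζ z)]
          · simp only [hηdef, if_neg hz, norm_zero]
            positivity
        have hpiece : (fun z => (inner ℝ (a (η z) - α z) (η z - G z) : ℝ))
            = (S i).piecewise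
                (fun z => (inner ℝ (a (G z + s • ζ z) - α z) (s • ζ z) : ℝ))
                (fun z => (inner ℝ (a 0 - α z) ((0 : EuclideanSpace ℝ (Fin d)) - G z) : ℝ)) := by
          funext z
          by_cases hz : z ∈ S i
          · have hz' : ‖G z‖ ≤ (i : ℝ) := hz
            simp only [Set.piecewise, if_pos hz, hηdef, if_pos hz', add_sub_cancel_left]
          · have hz' : ¬ ‖G z‖ ≤ (i : ℝ) := hz
            simp only [Set.piecewise, if_neg hz, hηdef, if_neg hz']
        have hint : Integrable (fun z => (inner ℝ (a (η z) - α z) (η z - G z) : ℝ)) μ := by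
          rw [hpiece]
          exact Integrable.piecewise (hSm i) int_f.integrableOn int_g.integrableOn
        have h30 := h3 η hηm hηb hint
        rwa [hpiece, integral_piecewise (hSm i) int_f.integrableOn int_g.integrableOn] at h30
      have lim1 : Filter.Tendsto
          (fun i : ℕ => ∫ z in S i, (inner ℝ (a (G z + s • ζ z) - α z) (s • ζ z) : ℝ) ∂μ)
          Filter.atTop
          (nhds (∫ z, (inner ℝ (a (G z + s • ζ z) - α z) (s • ζ z) : ℝ) ∂μ)) := by
        have := tendsto_setIntegral_of_monotone hSm hSmono
          (by rw [hSU]; exact int_f.integrableOn)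
        rwa [hSU, setIntegral_univ] at this
      have lim2 : Filter.Tendsto
          (fun i : ℕ => ∫ z in (S i)ᶜ,
              (inner ℝ (a 0 - α z) ((0 : EuclideanSpace ℝ (Fin d)) - G z) : ℝ) ∂μ)
          Filter.atTop (nhds 0) := by
        have lim2' := tendsto_setIntegral_of_monotone hSm hSmono
          (by rw [hSU]; exact int_g.integrableOn)
        rw [hSU, setIntegral_univ] at lim2'
        have heq : ∀ i : ℕ, (∫ z in (S i)ᶜ,
              (inner ℝ (a 0 - α z) ((0 : EuclideanSpace ℝ (Fin d)) - G z) : ℝ) ∂μ)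
            = (∫ z, (inner ℝ (a 0 - α z) ((0 : EuclideanSpace ℝ (Fin d)) - G z) : ℝ) ∂μ)
              - ∫ z in S i,
                (inner ℝ (a 0 - α z) ((0 : EuclideanSpace ℝ (Fin d)) - G z) : ℝ) ∂μ := by
          intro i
          rw [eq_sub_iff_add_eq, add_comm]
          exact integral_add_compl (hSm i) int_g
        simp only [heq]
        simpa using Filter.Tendsto.sub
          (tendsto_const_nhds
            (x := ∫ z, (inner ℝ (a 0 - α z) ((0 : EuclideanSpace ℝ (Fin d)) - G z) : ℝ) ∂μ)
            (f := Filter.atTop (α := ℕ))) lim2'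
      have hge : 0 ≤ (∫ z, (inner ℝ (a (G z + s • ζ z) - α z) (s • ζ z) : ℝ) ∂μ) + 0 :=
        ge_of_tendsto' (lim1.add lim2) main
      have hfs : (∫ z, (inner ℝ (a (G z + s • ζ z) - α z) (s • ζ z) : ℝ) ∂μ)
          = s * ∫ z, h s z ∂μ := by
        rw [← integral_const_mul]
        congr 1
        funext z
        rw [real_inner_smul_right]
      rw [add_zero, hfs] at hge
      nlinarith
    -- step 2: let s → 0 along 1/(n+1)
    have hseq : ∀ n : ℕ, 0 ≤ ∫ z, h (1 / ((n : ℝ) + 1)) z ∂μ := by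
      intro n
      refine step1 _ (by positivity) ?_
      rw [div_le_one (by positivity)]
      linarith [Nat.cast_nonneg (α := ℝ) n]
    have hDCT : Filter.Tendsto (fun n : ℕ => ∫ z, h (1 / ((n : ℝ) + 1)) z ∂μ)
        Filter.atTop (nhds (∫ z, h 0 z ∂μ)) := by
      refine tendsto_integral_of_dominated_convergence
        (fun z => |h 0 z| + |h 1 z|) (fun n => hmeas _) (int_h0.abs.add int_h1.abs) ?_ ?_
      · intro n
        filter_upwards with z
        have hpos : (0 : ℝ) < 1 / ((n : ℝ) + 1) := by positivity
        have hle1 : 1 / ((n : ℝ) + 1) ≤ 1 := by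
          rw [div_le_one (by positivity)]
          linarith [Nat.cast_nonneg (α := ℝ) n]
        have l1 := mono 0 _ hpos.le z
        have l2 := mono _ 1 hle1 z
        rw [Real.norm_eq_abs, abs_le]
        constructor
        · have := neg_abs_le (h 0 z)
          have := abs_nonneg (h 1 z)
          linarith
        · have := le_abs_self (h 1 z)
          have := abs_nonneg (h 0 z)
          linarith
      · filter_upwards with z
        have hc : Continuous (fun s : ℝ => h s z) := by
          apply Continuous.inner
          · exact (ha_cont.comp (continuous_const.add
              (continuous_id.smul continuous_const))).sub continuous_const
          · exact continuous_const
        have htend : Filter.Tendsto (fun n : ℕ => 1 / ((n : ℝ) + 1))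
            Filter.atTop (nhds 0) := tendsto_one_div_add_atTop_nhds_zero_nat
        exact (hc.tendsto 0).comp htend
    have h0nn : 0 ≤ ∫ z, h 0 z ∂μ := ge_of_tendsto' hDCT hseq
    have : (∫ z, h 0 z ∂μ) = ∫ z, (inner ℝ (a (G z) - α z) (ζ z) : ℝ) ∂μ := by
      congr 1; funext z; exact h0eq z
    linarith [this ▸ h0nn]
  -- Now choose ζ₀ = (1 + ‖F‖)⁻¹ • F with F = a∘G - α.
  have hFm : Measurable (fun z => a (G z) - α z) := (ha_cont.measurable.comp hG).sub hα
  set ζ₀ : Q → EuclideanSpace ℝ (Fin d) :=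
    fun z => (1 + ‖a (G z) - α z‖)⁻¹ • (a (G z) - α z) with hζ₀
  have hζ₀m : Measurable ζ₀ := ((hFm.norm.const_add 1).inv).smul hFm
  have hζ₀b : ∀ z, ‖ζ₀ z‖ ≤ 1 := by
    intro z
    have hpos : (0 : ℝ) < 1 + ‖a (G z) - α z‖ := by positivity
    rw [hζ₀]
    simp only
    rw [norm_smul, Real.norm_eq_abs, abs_of_pos (by positivity)]
    have h1' : (1 + ‖a (G z) - α z‖)⁻¹ * ‖a (G z) - α z‖
        ≤ (1 + ‖a (G z) - α z‖)⁻¹ * (1 + ‖a (G z) - α z‖) := by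
      gcongr
      linarith
    rw [inv_mul_cancel₀ hpos.ne'] at h1'
    exact h1'
  have k1 := key ζ₀ hζ₀m hζ₀b
  have k2 := key (fun z => -ζ₀ z) hζ₀m.neg (fun z => by simpa using hζ₀b z)
  have hint : Integrable (fun z => (inner ℝ (a (G z) - α z) (ζ₀ z) : ℝ)) μ := by
    obtain ⟨i1, i2, _⟩ := h2 ζ₀ hζ₀m ⟨1, hζ₀b⟩
    have heq : (fun z => (inner ℝ (a (G z) - α z) (ζ₀ z) : ℝ))
        = fun z => (inner ℝ (a (G z)) (ζ₀ z) : ℝ) - (inner ℝ (α z) (ζ₀ z) : ℝ) := by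
      funext z; rw [inner_sub_left]
    rw [heq]; exact i2.sub i1
  have hnn : ∀ z, 0 ≤ (inner ℝ (a (G z) - α z) (ζ₀ z) : ℝ) := by
    intro z
    rw [hζ₀]
    simp only
    rw [real_inner_smul_right, real_inner_self_eq_norm_sq]
    positivity
  have hzero : (∫ z, (inner ℝ (a (G z) - α z) (ζ₀ z) : ℝ) ∂μ) = 0 := by
    refine le_antisymm ?_ k1
    have heq : (∫ z, (inner ℝ (a (G z) - α z) (-ζ₀ z) : ℝ) ∂μ)
        = - ∫ z, (inner ℝ (a (G z) - α z) (ζ₀ z) : ℝ) ∂μ := by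
      rw [← integral_neg]
      congr 1; funext z; rw [inner_neg_right]
    rw [heq] at k2
    linarith
  have hae := (integral_eq_zero_iff_of_nonneg hnn hint).mp hzero
  filter_upwards [hae] with z hz
  have hz' : (inner ℝ (a (G z) - α z) (ζ₀ z) : ℝ) = 0 := hz
  rw [hζ₀] at hz'
  simp only at hz'
  rw [real_inner_smul_right, real_inner_self_eq_norm_sq] at hz'
  have hpos : (0 : ℝ) < (1 + ‖a (G z) - α z‖)⁻¹ := by positivity
  have hF0 : ‖a (G z) - α z‖ = 0 := by
    rcases mul_eq_zero.mp hz' with hc | hc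
    · exact absurd hc hpos.ne'
    · exact (pow_eq_zero_iff two_ne_zero).mp hc
  have hFz : a (G z) - α z = 0 := norm_eq_zero.mp hF0
  exact (sub_eq_zero.mp hFz).symm
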